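/- Orthogonality/anomaly of the L²-scaling of ΛW: let Λ̲ := r∂_r + D/2. For every integer D ≥ 5, ∫₀^∞ (Λ̲ΛW)(r) · ΛW(r) r^{D−1} dr = 0, while for D = 4, ∫₀^∞ (Λ̲ΛW)(r) · ΛW(r) r³ dr = 32. -/

import Mathlib

open MeasureTheory
open Set Filter Real Topology

/-- The Aubin–Talenti profile in radial coordinates. -/
noncomputable def AubinTalentiW (D : ℕ) (r : ℝ) : ℝ :=
  (1 + r ^ 2 / ((D : ℝ) * ((D : ℝ) - 2))) ^ (-(((D : ℝ) - 2) / 2))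

/-- The scaling mode `ΛW = r W' + ((D-2)/2) W`. -/
noncomputable def LamW (D : ℕ) (r : ℝ) : ℝ :=
  r * deriv (AubinTalentiW D) r + ((D : ℝ) - 2) / 2 * AubinTalentiW D r

/-- The L²-scaling generator applied to `ΛW`: `Λ̲(ΛW) = r (ΛW)' + (D/2) ΛW`. -/
noncomputable def ULamLamW (D : ℕ) (r : ℝ) : ℝ :=
  r * deriv (LamW D) r + (D : ℝ) / 2 * LamW D r

namespace ATaux

variable (D : ℕ)

noncomputable def cc : ℝ := (D : ℝ) * ((D : ℝ) - 2)
noncomputable def pp : ℝ := -(((D : ℝ) - 2) / 2)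
noncomputable def uu (r : ℝ) : ℝ := 1 + r ^ 2 / cc D

variable {D}

lemma hd4 (hD : 4 ≤ D) : (4 : ℝ) ≤ (D : ℝ) := by exact_mod_cast hD

lemma hc (hD : 4 ≤ D) : 0 < cc D := by
  have := hd4 hD; unfold cc; nlinarith

lemma hp (hD : 4 ≤ D) : pp D ≤ -1 := by
  have := hd4 hD; unfold pp; linarith

lemma hu1 (hD : 4 ≤ D) (r : ℝ) : 1 ≤ uu D r := by
  have h := hc hD
  have : 0 ≤ r ^ 2 / cc D := by positivity
  unfold uu; linarith

lemma hu0 (hD : 4 ≤ D) (r : ℝ) : 0 < uu D r := lt_of_lt_of_le one_pos (hu1 hD r)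

lemma hasDerivAt_uu (hD : 4 ≤ D) (r : ℝ) : HasDerivAt (uu D) (2 * r / cc D) r := by
  have h : HasDerivAt (fun r : ℝ => 1 + r ^ 2 / cc D) ((2 : ℕ) * r ^ (2 - 1) / cc D) r :=
    ((hasDerivAt_pow 2 r).div_const _).const_add 1
  refine h.congr_deriv ?_
  push_cast; ring

lemma W_eq : AubinTalentiW D = fun r => uu D r ^ pp D := by
  funext r; simp [AubinTalentiW, uu, cc, pp]

lemma hasDerivAt_W (hD : 4 ≤ D) (r : ℝ) :
    HasDerivAt (AubinTalentiW D) ((2 * r / cc D) * pp D * uu D r ^ (pp D - 1)) r := by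
  rw [W_eq]
  exact (hasDerivAt_uu hD r).rpow_const (Or.inl (hu0 hD r).ne')

lemma lamW_eq (hD : 4 ≤ D) (r : ℝ) :
    LamW D r = pp D * (r ^ 2 / cc D - 1) * uu D r ^ (pp D - 1) := by
  have hW := (hasDerivAt_W hD r).deriv
  have hup : uu D r ^ pp D = uu D r * uu D r ^ (pp D - 1) := by
    nth_rewrite 2 [← Real.rpow_one (uu D r)]
    rw [← Real.rpow_add (hu0 hD r)]
    ring_nf

  have hWe : AubinTalentiW D r = uu D r ^ pp D := by rw [W_eq]
  rw [LamW, hW, hWe, hup]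
  have h2 : ((D : ℝ) - 2) / 2 = -(pp D) := by unfold pp; ring
  rw [h2]
  unfold uu
  ring


lemma upow_add (hD : 4 ≤ D) (r a b : ℝ) :
    uu D r ^ a * uu D r ^ b = uu D r ^ (a + b) :=
  (Real.rpow_add (hu0 hD r) a b).symm

variable (D) in
noncomputable def LL (r : ℝ) : ℝ :=
  2 * pp D * r / cc D * ((2 - pp D) + pp D * r ^ 2 / cc D) * uu D r ^ (pp D - 2)

lemma hasDerivAt_LamW (hD : 4 ≤ D) (r : ℝ) : HasDerivAt (LamW D) (LL D r) r := by
  have hfe : LamW D = fun r => pp D * (r ^ 2 / cc D - 1) * uu D r ^ (pp D - 1) :=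
    funext (lamW_eq hD)
  rw [hfe]
  have h1 : HasDerivAt (fun r : ℝ => pp D * (r ^ 2 / cc D - 1)) (pp D * (2 * r / cc D)) r := by
    have h : HasDerivAt (fun r : ℝ => r ^ 2 / cc D - 1) ((2 : ℕ) * r ^ (2 - 1) / cc D) r :=
      ((hasDerivAt_pow 2 r).div_const _).sub_const 1
    refine (h.const_mul (pp D)).congr_deriv ?_
    push_cast; ring
  have h2 : HasDerivAt (fun r => uu D r ^ (pp D - 1))
      ((2 * r / cc D) * (pp D - 1) * uu D r ^ (pp D - 1 - 1)) r :=
    (hasDerivAt_uu hD r).rpow_const (Or.inl (hu0 hD r).ne')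
  have := h1.mul h2
  refine this.congr_deriv ?_
  have e1 : pp D - 1 - 1 = pp D - 2 := by ring
  rw [e1]
  have e2 : uu D r ^ (pp D - 1) = uu D r * uu D r ^ (pp D - 2) := by
    nth_rewrite 2 [← Real.rpow_one (uu D r)]
    rw [← Real.rpow_add (hu0 hD r)]
    ring_nf
  rw [LL, e2]
  unfold uu
  ring

lemma uLam_eq (hD : 4 ≤ D) (r : ℝ) :
    ULamLamW D r = (2 * pp D * r ^ 2 / cc D * ((2 - pp D) + pp D * r ^ 2 / cc D)
      + (1 - pp D) * pp D * (r ^ 2 / cc D - 1) * uu D r) * uu D r ^ (pp D - 2) := by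
  have hL := (hasDerivAt_LamW hD r).deriv
  rw [ULamLamW, hL, lamW_eq hD r]
  have h2 : (D : ℝ) / 2 = 1 - pp D := by unfold pp; ring
  have e2 : uu D r ^ (pp D - 1) = uu D r * uu D r ^ (pp D - 2) := by
    nth_rewrite 2 [← Real.rpow_one (uu D r)]
    rw [← Real.rpow_add (hu0 hD r)]
    ring_nf
  rw [h2, e2, LL]
  ring


variable (D) in
noncomputable def gg (r : ℝ) : ℝ := 1 / 2 * r ^ ((D : ℝ)) * (LamW D r) ^ 2

lemma hasDerivAt_gg (hD : 4 ≤ D) {r : ℝ} (hr : 0 < r) :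
    HasDerivAt (gg D) (ULamLamW D r * LamW D r * r ^ ((D : ℝ) - 1)) r := by
  have h1 : HasDerivAt (fun r : ℝ => r ^ ((D : ℝ))) ((D : ℝ) * r ^ ((D : ℝ) - 1)) r :=
    Real.hasDerivAt_rpow_const (Or.inl hr.ne')
  have h2 : HasDerivAt (fun r => (LamW D r) ^ 2) ((2 : ℕ) * LamW D r ^ (2 - 1) * LL D r) r :=
    (hasDerivAt_LamW hD r).pow 2
  have h := (h1.mul h2).const_mul (1 / 2 : ℝ)
  have hfun : gg D = fun r : ℝ => 1 / 2 * (r ^ ((D : ℝ)) * (LamW D r) ^ 2) := by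
    funext x; rw [gg]; ring
  rw [hfun]
  refine h.congr_deriv ?_
  have hL := (hasDerivAt_LamW hD r).deriv
  simp only [ULamLamW]
  rw [hL]
  have e : r ^ ((D : ℝ)) = r ^ ((D : ℝ) - 1) * r := by
    have h' := Real.rpow_add hr ((D : ℝ) - 1) 1
    rw [Real.rpow_one] at h'
    rw [← h']
    congr 1; ring
  rw [e]
  push_cast
  ring

lemma cont_uupow (hD : 4 ≤ D) (q : ℝ) : Continuous (fun r => uu D r ^ q) := by
  have hu : Continuous (uu D) := by
    unfold uu; fun_prop
  exact hu.rpow_const fun x => Or.inl (hu0 hD x).ne'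

lemma cont_LamW (hD : 4 ≤ D) : Continuous (LamW D) := by
  rw [funext (lamW_eq hD)]
  exact (by fun_prop : Continuous fun r : ℝ => pp D * (r ^ 2 / cc D - 1)).mul (cont_uupow hD _)

lemma cont_UL (hD : 4 ≤ D) : Continuous (ULamLamW D) := by
  rw [funext (uLam_eq hD)]
  refine Continuous.mul ?_ (cont_uupow hD _)
  have hu : Continuous (uu D) := by unfold uu; fun_prop
  fun_prop

lemma gg_zero (hD : 4 ≤ D) : gg D 0 = 0 := by
  simp [gg]
  exact Or.inl (by omega)

lemma cont_gg (hD : 4 ≤ D) : ContinuousWithinAt (gg D) (Ici 0) 0 := by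
  apply ContinuousAt.continuousWithinAt
  have h1 : ContinuousAt (fun r : ℝ => r ^ ((D : ℝ))) 0 :=
    Real.continuousAt_rpow_const 0 _ (Or.inr (by positivity))
  exact (continuousAt_const.mul h1).mul ((cont_LamW hD).pow 2).continuousAt

lemma gg_eq (hD : 4 ≤ D) {r : ℝ} (hr : 0 < r) :
    gg D r = pp D ^ 2 / 2 * r ^ ((4 : ℝ) - (D : ℝ)) * (1 / cc D - (r⁻¹) ^ 2) ^ 2
      * ((r⁻¹) ^ 2 + 1 / cc D) ^ (-(D : ℝ)) := by
  have hc' := hc hD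
  have hu' := hu0 hD r
  have h2p : uu D r ^ (pp D - 1) * uu D r ^ (pp D - 1) = uu D r ^ (-(D : ℝ)) := by
    rw [upow_add hD]
    congr 1
    unfold pp; ring
  have hY : (0 : ℝ) < (r⁻¹) ^ 2 + 1 / cc D := by positivity
  have hu_eq : uu D r = r ^ 2 * ((r⁻¹) ^ 2 + 1 / cc D) := by
    unfold uu; field_simp
  have hsplit : uu D r ^ (-(D : ℝ))
      = (r ^ 2) ^ (-(D : ℝ)) * ((r⁻¹) ^ 2 + 1 / cc D) ^ (-(D : ℝ)) := by
    rw [hu_eq, Real.mul_rpow (by positivity) hY.le]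
  have hr2 : (r ^ 2 : ℝ) ^ (-(D : ℝ)) = r ^ (2 * -(D : ℝ)) := by
    rw [← Real.rpow_natCast r 2, ← Real.rpow_mul hr.le]
    norm_num
  have hsq : (r ^ 2 / cc D - 1) = r ^ 2 * (1 / cc D - (r⁻¹) ^ 2) := by
    field_simp
  have hpow : r ^ ((D : ℝ)) * r ^ (2 * -(D : ℝ)) * (r ^ 2) ^ 2 = r ^ ((4 : ℝ) - (D : ℝ)) := by
    have h4 : ((r ^ 2) ^ 2 : ℝ) = r ^ ((4 : ℝ)) := by
      rw [show ((4 : ℝ)) = ((4 : ℕ) : ℝ) by norm_num, Real.rpow_natCast]; ring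
    rw [h4, ← Real.rpow_add hr, ← Real.rpow_add hr]
    congr 1; ring
  rw [gg, lamW_eq hD r]
  have hsq2 : (pp D * (r ^ 2 / cc D - 1) * uu D r ^ (pp D - 1)) ^ 2
      = pp D ^ 2 * (r ^ 2 / cc D - 1) ^ 2 * (uu D r ^ (pp D - 1) * uu D r ^ (pp D - 1)) := by
    ring
  rw [hsq2, h2p, hsplit, hr2, hsq, ← hpow]
  ring


lemma tendsto_aux (hD : 4 ≤ D) (L : ℝ)
    (h1 : Tendsto (fun r : ℝ => r ^ ((4 : ℝ) - (D : ℝ))) atTop (𝓝 L)) :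
    Tendsto (gg D) atTop
      (𝓝 (pp D ^ 2 / 2 * L * (1 / cc D - 0) ^ 2 * ((0 + 1 / cc D) ^ (-(D : ℝ))))) := by
  have hc' := hc hD
  have hinv : Tendsto (fun r : ℝ => (r⁻¹ : ℝ) ^ 2) atTop (𝓝 0) := by
    simpa using (tendsto_inv_atTop_zero : Tendsto (fun r : ℝ => r⁻¹) atTop (𝓝 0)).pow 2
  have h2 : Tendsto (fun r : ℝ => (1 / cc D - (r⁻¹) ^ 2) ^ 2) atTop (𝓝 ((1 / cc D - 0) ^ 2)) :=
    (tendsto_const_nhds.sub hinv).pow 2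
  have h3base : Tendsto (fun r : ℝ => (r⁻¹) ^ 2 + 1 / cc D) atTop (𝓝 (0 + 1 / cc D)) :=
    hinv.add tendsto_const_nhds
  have h3 : Tendsto (fun r : ℝ => ((r⁻¹) ^ 2 + 1 / cc D) ^ (-(D : ℝ))) atTop
      (𝓝 ((0 + 1 / cc D) ^ (-(D : ℝ)))) :=
    (Real.continuousAt_rpow_const _ _ (Or.inl (by positivity))).tendsto.comp h3base
  have hall := ((h1.const_mul (pp D ^ 2 / 2)).mul h2).mul h3
  apply hall.congr'
  filter_upwards [eventually_gt_atTop (0 : ℝ)] with r hr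
  exact (gg_eq hD hr).symm

lemma tendsto_gg5 (hD : 5 ≤ D) : Tendsto (gg D) atTop (𝓝 0) := by
  have hD4 : (4 : ℕ) ≤ D := by omega
  have hd5 : (5 : ℝ) ≤ (D : ℝ) := by exact_mod_cast hD
  have h1 : Tendsto (fun r : ℝ => r ^ ((4 : ℝ) - (D : ℝ))) atTop (𝓝 0) := by
    rw [show (4 : ℝ) - (D : ℝ) = -((D : ℝ) - 4) by ring]
    exact tendsto_rpow_neg_atTop (by linarith)
  have := tendsto_aux hD4 0 h1
  simpa using this

lemma tendsto_gg4 : Tendsto (gg 4) atTop (𝓝 32) := by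
  have h1 : Tendsto (fun r : ℝ => r ^ ((4 : ℝ) - ((4 : ℕ) : ℝ))) atTop (𝓝 1) := by
    have he : ∀ r : ℝ, r ^ ((4 : ℝ) - ((4 : ℕ) : ℝ)) = 1 := by
      intro r
      norm_num
    simp only [he]
    exact tendsto_const_nhds
  have := tendsto_aux (le_refl 4) 1 h1
  have hval : pp 4 ^ 2 / 2 * 1 * (1 / cc 4 - 0) ^ 2 * ((0 + 1 / cc 4) ^ (-((4:ℕ) : ℝ))) = 32 := by
    have hcc : cc 4 = 8 := by norm_num [cc]
    have hpp : pp 4 = -1 := by norm_num [pp]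
    rw [hcc, hpp]
    rw [show (-((4:ℕ) : ℝ)) = ((-4 : ℤ) : ℝ) by norm_num, Real.rpow_intCast]
    norm_num
  rwa [hval] at this


lemma u_mul (hD : 4 ≤ D) (r a : ℝ) : uu D r * uu D r ^ a = uu D r ^ (1 + a) := by
  have h := upow_add hD r 1 a
  rwa [Real.rpow_one] at h

lemma ppneg (hD : 4 ≤ D) : 0 < -pp D := by linarith [hp hD]

lemma absLamW_le (hD : 4 ≤ D) (r : ℝ) : |LamW D r| ≤ (-pp D) * uu D r ^ (pp D) := by
  rw [lamW_eq hD r]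
  have hu' := hu0 hD r
  have hu1' := hu1 hD r
  have hcc := hc hD
  have hq := ppneg hD
  have hup : (0 : ℝ) < uu D r ^ (pp D - 1) := Real.rpow_pos_of_pos hu' _
  have hs : 0 ≤ r ^ 2 / cc D := by positivity
  have husum : uu D r = 1 + r ^ 2 / cc D := rfl
  have habs : |r ^ 2 / cc D - 1| ≤ uu D r := by
    rw [abs_le]; constructor <;> [nlinarith; nlinarith]
  calc |pp D * (r ^ 2 / cc D - 1) * uu D r ^ (pp D - 1)|
      = (-pp D) * |r ^ 2 / cc D - 1| * uu D r ^ (pp D - 1) := by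
        rw [abs_mul, abs_mul, abs_of_pos hup, abs_of_neg (by linarith : pp D < 0)]
    _ ≤ (-pp D) * uu D r * uu D r ^ (pp D - 1) := by
        exact mul_le_mul_of_nonneg_right (mul_le_mul_of_nonneg_left habs hq.le) hup.le
    _ = (-pp D) * uu D r ^ (pp D) := by
        rw [mul_assoc, u_mul hD]
        congr 2; ring

lemma absUL_le (hD : 4 ≤ D) (r : ℝ) :
    |ULamLamW D r| ≤ 5 * (1 - pp D) * (-pp D) * uu D r ^ (pp D) := by
  rw [uLam_eq hD r]
  have hu' := hu0 hD r
  have hu1' := hu1 hD r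
  have hcc := hc hD
  have hp' := hp hD
  have hup : (0 : ℝ) < uu D r ^ (pp D - 2) := Real.rpow_pos_of_pos hu' _
  have hsu : r ^ 2 / cc D = uu D r - 1 := by
    show r ^ 2 / cc D = (1 + r ^ 2 / cc D) - 1; ring
  have hQ : |2 * pp D * r ^ 2 / cc D * ((2 - pp D) + pp D * r ^ 2 / cc D)
      + (1 - pp D) * pp D * (r ^ 2 / cc D - 1) * uu D r| ≤ 5 * (1 - pp D) * (-pp D) * uu D r ^ 2 := by
    have e1 : 2 * pp D * r ^ 2 / cc D = 2 * pp D * (r ^ 2 / cc D) := by ring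
    have e2 : pp D * r ^ 2 / cc D = pp D * (r ^ 2 / cc D) := by ring
    rw [e1, e2, hsu, abs_le]
    set p := pp D; set u := uu D r
    constructor
    · nlinarith [sq_nonneg (u-1), sq_nonneg u, sq_nonneg (p*u), sq_nonneg (p*(u-1)),
        mul_nonneg (neg_nonneg.2 (by linarith : p ≤ 0)) (by linarith : (0:ℝ) ≤ u - 1),
        sq_nonneg (p*u + u), sq_nonneg (p*u - u)]
    · nlinarith [sq_nonneg (u-1), sq_nonneg u, sq_nonneg (p*u), sq_nonneg (p*(u-1)),
        mul_nonneg (neg_nonneg.2 (by linarith : p ≤ 0)) (by linarith : (0:ℝ) ≤ u - 1),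
        sq_nonneg (p*u + u), sq_nonneg (p*u - u)]
  calc |(2 * pp D * r ^ 2 / cc D * ((2 - pp D) + pp D * r ^ 2 / cc D)
      + (1 - pp D) * pp D * (r ^ 2 / cc D - 1) * uu D r) * uu D r ^ (pp D - 2)|
      = |2 * pp D * r ^ 2 / cc D * ((2 - pp D) + pp D * r ^ 2 / cc D)
      + (1 - pp D) * pp D * (r ^ 2 / cc D - 1) * uu D r| * uu D r ^ (pp D - 2) := by
        rw [abs_mul, abs_of_pos hup]
    _ ≤ (5 * (1 - pp D) * (-pp D) * uu D r ^ 2) * uu D r ^ (pp D - 2) :=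
        mul_le_mul_of_nonneg_right hQ hup.le
    _ = 5 * (1 - pp D) * (-pp D) * uu D r ^ (pp D) := by
        have h2 : (uu D r : ℝ) ^ (2 : ℕ) = uu D r ^ ((2 : ℝ)) := by
          rw [← Real.rpow_natCast (uu D r) 2]; norm_num
        rw [mul_assoc, h2, upow_add hD]
        congr 2; ring

lemma absF_le (hD : 4 ≤ D) {r : ℝ} (hr : 1 < r) :
    |ULamLamW D r * LamW D r * r ^ ((D : ℝ) - 1)|
      ≤ (5 * (1 - pp D) * pp D ^ 2 * cc D ^ (-(2 * pp D))) * r ^ ((3 : ℝ) - (D : ℝ)) := by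
  have hr0 : (0 : ℝ) < r := by linarith
  have hu' := hu0 hD r
  have hcc := hc hD
  have hq := ppneg hD
  have hrp : (0 : ℝ) < r ^ ((D : ℝ) - 1) := Real.rpow_pos_of_pos hr0 _
  have hupp : (0 : ℝ) < uu D r ^ pp D := Real.rpow_pos_of_pos hu' _
  have h1 : |ULamLamW D r * LamW D r * r ^ ((D : ℝ) - 1)|
      = |ULamLamW D r| * |LamW D r| * r ^ ((D : ℝ) - 1) := by
    rw [abs_mul, abs_mul, abs_of_pos hrp]
  rw [h1]
  have h2 : |ULamLamW D r| * |LamW D r|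
      ≤ (5 * (1 - pp D) * (-pp D) * uu D r ^ pp D) * ((-pp D) * uu D r ^ pp D) := by
    apply mul_le_mul (absUL_le hD r) (absLamW_le hD r) (abs_nonneg _)
    have h1p : (0 : ℝ) ≤ 1 - pp D := by linarith [hp hD]
    exact mul_nonneg (mul_nonneg (mul_nonneg (by norm_num) h1p) hq.le) hupp.le
  have h3 : (5 * (1 - pp D) * (-pp D) * uu D r ^ pp D) * ((-pp D) * uu D r ^ pp D)
      = 5 * (1 - pp D) * pp D ^ 2 * uu D r ^ (2 * pp D) := by
    have := upow_add hD r (pp D) (pp D)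
    rw [show (2 : ℝ) * pp D = pp D + pp D by ring, ← this]
    ring
  have h4 : uu D r ^ (2 * pp D) ≤ (r ^ 2 / cc D) ^ (2 * pp D) := by
    apply Real.rpow_le_rpow_of_nonpos (by positivity) _ (by linarith)
    show r ^ 2 / cc D ≤ 1 + r ^ 2 / cc D
    linarith
  have h5 : (r ^ 2 / cc D) ^ (2 * pp D) = r ^ (4 * pp D) * cc D ^ (-(2 * pp D)) := by
    rw [div_eq_mul_inv, Real.mul_rpow (by positivity) (by positivity),
      Real.inv_rpow hcc.le, ← Real.rpow_neg hcc.le]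
    congr 1
    rw [← Real.rpow_natCast r 2, ← Real.rpow_mul hr0.le]
    congr 1; ring
  have h6 : r ^ (4 * pp D) * r ^ ((D : ℝ) - 1) = r ^ ((3 : ℝ) - (D : ℝ)) := by
    rw [← Real.rpow_add hr0]
    congr 1
    have : pp D = -(((D : ℝ) - 2) / 2) := rfl
    rw [this]; ring
  calc |ULamLamW D r| * |LamW D r| * r ^ ((D : ℝ) - 1)
      ≤ (5 * (1 - pp D) * pp D ^ 2 * uu D r ^ (2 * pp D)) * r ^ ((D : ℝ) - 1) := by
        rw [← h3]; exact mul_le_mul_of_nonneg_right h2 hrp.le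
    _ ≤ (5 * (1 - pp D) * pp D ^ 2 * (r ^ 2 / cc D) ^ (2 * pp D)) * r ^ ((D : ℝ) - 1) := by
        apply mul_le_mul_of_nonneg_right _ hrp.le
        apply mul_le_mul_of_nonneg_left h4
        nlinarith
    _ = (5 * (1 - pp D) * pp D ^ 2 * cc D ^ (-(2 * pp D))) * r ^ ((3 : ℝ) - (D : ℝ)) := by
        rw [h5, ← h6]; ring


lemma cont_rpow_exp (hD : 4 ≤ D) (q : ℝ) (hq : 0 ≤ q) : Continuous fun r : ℝ => r ^ q := by
  rw [continuous_iff_continuousAt]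
  intro x
  exact Real.continuousAt_rpow_const x _ (Or.inr hq)

lemma cont_F (hD : 4 ≤ D) :
    Continuous fun r : ℝ => ULamLamW D r * LamW D r * r ^ ((D : ℝ) - 1) := by
  have h : (0 : ℝ) ≤ (D : ℝ) - 1 := by have := hd4 hD; linarith
  exact ((cont_UL hD).mul (cont_LamW hD)).mul (cont_rpow_exp hD _ h)

lemma integrableF5 (hD : 5 ≤ D) :
    IntegrableOn (fun r => ULamLamW D r * LamW D r * r ^ ((D : ℝ) - 1)) (Ioi (0 : ℝ)) := by
  have hD4 : (4 : ℕ) ≤ D := by omega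
  have hd5 : (5 : ℝ) ≤ (D : ℝ) := by exact_mod_cast hD
  have contF := cont_F hD4
  rw [← Set.Ioc_union_Ioi_eq_Ioi (by norm_num : (0 : ℝ) ≤ 1)]
  apply IntegrableOn.union
  · exact contF.integrableOn_Ioc
  · have hint : IntegrableOn
        (fun r : ℝ => (5 * (1 - pp D) * pp D ^ 2 * cc D ^ (-(2 * pp D))) * r ^ ((3 : ℝ) - (D : ℝ)))
        (Ioi (1 : ℝ)) :=
      (integrableOn_Ioi_rpow_of_lt (by linarith) one_pos).const_mul _
    apply Integrable.mono' hint contF.aestronglyMeasurable.restrict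
    filter_upwards [ae_restrict_mem measurableSet_Ioi] with r hr
    exact absF_le hD4 hr

lemma lam4 (r : ℝ) : LamW 4 r = (1 - r ^ 2 / 8) / (1 + r ^ 2 / 8) ^ 2 := by
  have h := lamW_eq (le_refl 4) r
  have hcc : cc 4 = 8 := by norm_num [cc]
  have hpp : pp 4 = -1 := by norm_num [pp]
  have hu : uu 4 r = 1 + r ^ 2 / 8 := by rw [uu, hcc]
  have h0 : (0 : ℝ) < 1 + r ^ 2 / 8 := by positivity
  rw [h, hcc, hpp, hu]
  rw [show (-1 : ℝ) - 1 = ((-2 : ℤ) : ℝ) by norm_num, Real.rpow_intCast]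
  rw [show ((1 + r ^ 2 / 8 : ℝ) ^ (-2 : ℤ)) = ((1 + r ^ 2 / 8) ^ 2)⁻¹ by
    rw [zpow_neg]; norm_cast]
  field_simp
  all_goals ring

lemma ul4 (r : ℝ) : ULamLamW 4 r = (2 - 3 * r ^ 2 / 4) / (1 + r ^ 2 / 8) ^ 3 := by
  have h := uLam_eq (le_refl 4) r
  have hcc : cc 4 = 8 := by norm_num [cc]
  have hpp : pp 4 = -1 := by norm_num [pp]
  have hu : uu 4 r = 1 + r ^ 2 / 8 := by rw [uu, hcc]
  have h0 : (0 : ℝ) < 1 + r ^ 2 / 8 := by positivity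
  rw [h, hcc, hpp, hu]
  rw [show (-1 : ℝ) - 2 = ((-3 : ℤ) : ℝ) by norm_num, Real.rpow_intCast]
  rw [show ((1 + r ^ 2 / 8 : ℝ) ^ (-3 : ℤ)) = ((1 + r ^ 2 / 8) ^ 3)⁻¹ by
    rw [zpow_neg]; norm_cast]
  field_simp
  all_goals ring

lemma integrableF4 :
    IntegrableOn (fun r => ULamLamW 4 r * LamW 4 r * r ^ (((4 : ℕ) : ℝ) - 1)) (Ioi (0 : ℝ)) := by
  have contF := cont_F (le_refl 4)
  rw [← Set.Ioc_union_Ioi_eq_Ioi (by norm_num : (0 : ℝ) ≤ 1)]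
  apply IntegrableOn.union
  · exact contF.integrableOn_Ioc
  · have hint : IntegrableOn (fun r : ℝ => (3 * 8 ^ 5 : ℝ) * r ^ ((-3 : ℝ))) (Ioi (1 : ℝ)) :=
      (integrableOn_Ioi_rpow_of_lt (by norm_num) one_pos).const_mul _
    apply Integrable.mono' hint contF.aestronglyMeasurable.restrict
    filter_upwards [ae_restrict_mem measurableSet_Ioi] with r hr
    have hr1 : (1 : ℝ) < r := hr
    have hr0 : (0 : ℝ) < r := by linarith
    have h0 : (0 : ℝ) < 1 + r ^ 2 / 8 := by positivity
    have hre : r ^ (((4 : ℕ) : ℝ) - 1) = r ^ (3 : ℕ) := by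
      rw [show ((4 : ℕ) : ℝ) - 1 = ((3 : ℕ) : ℝ) by norm_num, Real.rpow_natCast]
    have hmr : r ^ ((-3 : ℝ)) = (r ^ (3 : ℕ))⁻¹ := by
      rw [show (-3 : ℝ) = -((3 : ℕ) : ℝ) by norm_num, Real.rpow_neg hr0.le, Real.rpow_natCast]
    rw [Real.norm_eq_abs, lam4, ul4, hre, hmr]
    have habs1 : |2 - 3 * r ^ 2 / 4| ≤ 3 * r ^ 2 := by
      rw [abs_le]; constructor <;> nlinarith
    have habs2 : |1 - r ^ 2 / 8| ≤ r ^ 2 := by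
      rw [abs_le]; constructor <;> nlinarith
    have key : r ^ 2 ≤ 8 * (1 + r ^ 2 / 8) := by nlinarith
    have key5 : (r ^ 2) ^ 5 ≤ (8 * (1 + r ^ 2 / 8)) ^ 5 := by
      exact pow_le_pow_left₀ (by positivity) key 5
    have geq : (2 - 3 * r ^ 2 / 4) / (1 + r ^ 2 / 8) ^ 3 * ((1 - r ^ 2 / 8) / (1 + r ^ 2 / 8) ^ 2)
        * r ^ (3 : ℕ) = (2 - 3 * r ^ 2 / 4) * (1 - r ^ 2 / 8) * r ^ (3 : ℕ) / (1 + r ^ 2 / 8) ^ 5 := by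
      field_simp
    rw [geq, abs_div, abs_mul, abs_mul,
      abs_of_pos (by positivity : (0:ℝ) < (1 + r ^ 2 / 8) ^ 5),
      abs_of_pos (by positivity : (0:ℝ) < r ^ (3 : ℕ)),
      div_le_iff₀ (by positivity : (0:ℝ) < (1 + r ^ 2 / 8) ^ 5),
      show (3 * 8 ^ 5 : ℝ) * (r ^ (3:ℕ))⁻¹ * (1 + r ^ 2 / 8) ^ 5
        = 3 * 8 ^ 5 * (1 + r ^ 2 / 8) ^ 5 / r ^ (3:ℕ) by ring,
      le_div_iff₀ (by positivity : (0:ℝ) < r ^ (3:ℕ))]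
    have h1 : |2 - 3 * r ^ 2 / 4| * |1 - r ^ 2 / 8| * r ^ (3:ℕ) * r ^ (3:ℕ)
        ≤ (3 * r ^ 2) * (r ^ 2) * r ^ (3:ℕ) * r ^ (3:ℕ) := by
      gcongr
    have h2 : (3 * r ^ 2) * (r ^ 2) * r ^ (3:ℕ) * r ^ (3:ℕ) ≤ 3 * 8 ^ 5 * (1 + r ^ 2 / 8) ^ 5 := by
      have e : (3 * r ^ 2) * (r ^ 2) * r ^ (3:ℕ) * r ^ (3:ℕ) = 3 * (r ^ 2) ^ 5 := by ring
      rw [e]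
      nlinarith [key5]
    linarith

end ATaux

theorem stmt_10 :
    (∀ D : ℕ, 5 ≤ D →
      ∫ r in Set.Ioi (0 : ℝ), ULamLamW D r * LamW D r * r ^ ((D : ℝ) - 1) = 0) ∧
    (∫ r in Set.Ioi (0 : ℝ), ULamLamW 4 r * LamW 4 r * r ^ 3 = 32) := by
  constructor
  · intro D hD
    have hD4 : (4 : ℕ) ≤ D := by omega
    have h := integral_Ioi_of_hasDerivAt_of_tendsto (ATaux.cont_gg hD4)
      (fun x hx => ATaux.hasDerivAt_gg hD4 hx) (ATaux.integrableF5 hD) (ATaux.tendsto_gg5 hD)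
    rw [h, ATaux.gg_zero hD4, sub_zero]
  · have h := integral_Ioi_of_hasDerivAt_of_tendsto (ATaux.cont_gg (le_refl 4))
      (fun x hx => ATaux.hasDerivAt_gg (le_refl 4) hx) ATaux.integrableF4 ATaux.tendsto_gg4
    rw [ATaux.gg_zero (le_refl 4), sub_zero] at h
    rw [← h]
    apply setIntegral_congr_fun measurableSet_Ioi
    intro r hr
    have : r ^ (((4 : ℕ) : ℝ) - 1) = r ^ (3 : ℕ) := by
      rw [show ((4 : ℕ) : ℝ) - 1 = ((3 : ℕ) : ℝ) by norm_num, Real.rpow_natCast]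
    simp only []
    rw [this]
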